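/- arXiv:1403.0610 — 3 statements merged into one kernel-verified Lean document; each statement's English description precedes it below -/
import Mathlib

section
/- Let d ≥ 0 be an integer and suppose ζ ∈ R is a primitive p^{d+1}-th root of unity. Let w ∈ W(K) be the unique Witt vector whose ghost components are ghost_i(w) = ζ^{p^i} − 1 for all i ≥ 0. Then every Witt coordinate of w lies in R; that is, w ∈ W(R). -/
theorem statement_0 (p : ℕ) [Fact p.Prime] (K : Type*) [Field K] [CharZero K]
    (v : AbsoluteValue K ℝ)
    (hna : ∀ x y : K, v (x + y) ≤ max (v x) (v y))
    (hvp : v (p : K) = 1 / (p : ℝ))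
    (d : ℕ) (ζ : K) (hζR : v ζ ≤ 1) (hζ : IsPrimitiveRoot ζ (p ^ (d + 1)))
    (w : WittVector p K)
    (hw : ∀ i : ℕ, WittVector.ghostComponent i w = ζ ^ (p ^ i) - 1) :
    ∀ n : ℕ, v (w.coeff n) ≤ 1 := by
  -- the valuation ring
  set O : Subring K :=
    { carrier := {x | v x ≤ 1}
      one_mem' := by simp
      mul_mem' := fun {a b} ha hb => by
        simp only [Set.mem_setOf_eq, map_mul] at *
        calc v a * v b ≤ 1 * 1 := mul_le_mul ha hb (v.nonneg b) zero_le_one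
        _ = 1 := by ring
      zero_mem' := by simp
      add_mem' := fun {a b} ha hb => by
        simp only [Set.mem_setOf_eq] at *
        exact le_trans (hna a b) (max_le ha hb)
      neg_mem' := fun {a} ha => by
        simpa only [Set.mem_setOf_eq, v.map_neg] using ha } with hO
  have hζO : ζ ∈ O := hζR
  set ζ₀ : O := ⟨ζ, hζO⟩ with hζ₀
  set u : WittVector p O := WittVector.teichmuller p ζ₀ - 1 with hu
  have hp : Invertible (p : K) := invertibleOfNonzero (by
    exact_mod_cast Nat.cast_ne_zero.mpr (Fact.out : p.Prime).ne_zero)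
  have key : w = WittVector.map O.subtype u := by
    apply (WittVector.ghostMap.bijective_of_invertible p K).injective
    funext n
    rw [WittVector.ghostMap_apply, WittVector.ghostMap_apply, hw, hu]
    simp [WittVector.map_teichmuller, WittVector.ghostComponent_teichmuller]
    rfl
  intro n
  rw [key, WittVector.map_coeff]
  exact (u.coeff n).2
end

section
/- Let P ∈ K[T] be a polynomial with P(0) = 0 and write exp(P(T)) = ∑_{n≥0} b_n T^n ∈ K⟦T⟧. Then limsup_{n→∞} ‖b_n‖^{1/n} ≤ 1 if and only if ‖b_n‖ ≤ 1 for every n ≥ 0. (Equivalently: the radius of convergence of exp(P(T)) is at least 1 if and only if all its coefficients lie in R.) -/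
open Filter

/-- The formal exponential `exp(f)` of a power series `f` (intended for `f` with zero
constant coefficient), defined coefficientwise by
`coeff n (exp f) = ∑_{k=0}^{n} (coeff n of f^k) / k!`. -/
noncomputable def pexp {K : Type*} [Field K] (f : PowerSeries K) : PowerSeries K :=
  PowerSeries.mk fun n =>
    ∑ k ∈ Finset.range (n + 1), (k.factorial : K)⁻¹ * PowerSeries.coeff n (f ^ k)

section Aux

variable {K : Type*} [Field K] (v : AbsoluteValue K ℝ)
  (hna : ∀ x y : K, v (x + y) ≤ max (v x) (v y))

include hna in
theorem v_sum_le {ι : Type*} (s : Finset ι) (x : ι → K) {C : ℝ} (hC : 0 ≤ C)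
    (h : ∀ i ∈ s, v (x i) ≤ C) : v (∑ i ∈ s, x i) ≤ C := by
  classical
  induction s using Finset.induction_on with
  | empty => simpa using hC
  | insert _ _ hnotmem ih =>
    rename_i a s
    rw [Finset.sum_insert hnotmem]
    refine le_trans (hna _ _) (max_le (h a (Finset.mem_insert_self a s)) (ih fun i hi => h i (Finset.mem_insert_of_mem hi)))

include hna in
theorem v_nat_le_one (n : ℕ) : v (n : K) ≤ 1 := by
  induction n with
  | zero => simp
  | succ k ih =>
    push_cast
    exact le_trans (hna _ _) (max_le ih (by simp))

include hna in
theorem v_int_le_one (z : ℤ) : v (z : K) ≤ 1 := by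
  have h := v_nat_le_one v hna z.natAbs
  rcases Int.natAbs_eq z with hz | hz
  · rw [hz, Int.cast_natCast]; exact h
  · rw [hz, Int.cast_neg, v.map_neg, Int.cast_natCast]; exact h

end Aux

section Prime
variable {K : Type*} [Field K] (v : AbsoluteValue K ℝ)
  (hna : ∀ x y : K, v (x + y) ≤ max (v x) (v y))
  (p : ℕ) [Fact p.Prime] (hvp : v (p : K) = 1 / (p : ℝ))

include hna hvp in
theorem v_of_not_dvd (m : ℕ) (hm : ¬ p ∣ m) : v (m : K) = 1 := by
  have hp : p.Prime := Fact.out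
  have hcop : IsCoprime (m : ℤ) (p : ℤ) := by
    rw [Int.isCoprime_iff_gcd_eq_one, Int.gcd_natCast_natCast]
    exact Nat.Coprime.gcd_eq_one (((Nat.Prime.coprime_iff_not_dvd hp).mpr hm).symm)
  obtain ⟨a, c, hab⟩ := hcop
  have h1 : (a : K) * m + c * p = 1 := by exact_mod_cast congrArg (fun z : ℤ => (z : K)) hab
  have hple : (1:ℝ)/p < 1 := by
    have : (1:ℝ) < p := by exact_mod_cast hp.one_lt
    rw [div_lt_one (by linarith)]; linarith
  have h2 : (1 : ℝ) ≤ max (v m) (1/p) := by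
    calc (1:ℝ) = v 1 := (v.map_one).symm
    _ = v ((a:K) * m + c * p) := by rw [h1]
    _ ≤ max (v ((a:K) * m)) (v ((c:K) * p)) := hna _ _
    _ ≤ max (v m) (1/p) := by
        apply max_le_max
        · rw [v.map_mul]
          exact mul_le_of_le_one_left (v.nonneg _) (v_int_le_one v hna a)
        · rw [v.map_mul, hvp]
          exact mul_le_of_le_one_left (by positivity) (v_int_le_one v hna c)
  have h3 : (1:ℝ) ≤ v m := by
    rcases le_max_iff.mp h2 with h | h
    · exact h
    · linarith
  exact le_antisymm (v_nat_le_one v hna m) h3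

include hna hvp in
theorem v_factorial_ge (k : ℕ) : ((p:ℝ))⁻¹ ^ k ≤ v ((k.factorial : K)) := by
  have hp : p.Prime := Fact.out
  set e := padicValNat p k.factorial with he_def
  have he : e ≤ k := by
    have h1 := sub_one_mul_padicValNat_factorial (p := p) k
    have h2 : (p - 1) * e ≤ k := by
      rw [h1]; exact Nat.sub_le _ _
    have h3 : 1 ≤ p - 1 := by have := hp.two_le; omega
    calc e = 1 * e := (one_mul e).symm
    _ ≤ (p-1) * e := Nat.mul_le_mul_right e h3
    _ ≤ k := h2
  have hfac : k.factorial = p ^ e * (k.factorial / p ^ e) := by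
    have := Nat.ordProj_mul_ordCompl_eq_self k.factorial p
    rw [Nat.factorization_def _ hp] at this
    exact this.symm
  have hnd : ¬ p ∣ (k.factorial / p ^ e) := by
    have := Nat.not_dvd_ordCompl hp (Nat.factorial_ne_zero k)
    rwa [Nat.factorization_def _ hp] at this
  have hppos : (0:ℝ) < p := by exact_mod_cast hp.pos
  calc ((p:ℝ))⁻¹ ^ k ≤ ((p:ℝ))⁻¹ ^ e := by
        apply pow_le_pow_of_le_one (by positivity) _ he
        rw [inv_le_one_iff₀]; right; exact_mod_cast hp.one_le
  _ = v ((k.factorial : K)) := by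
        rw [hfac]
        push_cast
        rw [v.map_mul, v.map_pow, hvp, v_of_not_dvd v hna p hvp _ hnd, mul_one, one_div]
end Prime

section Pexp
open PowerSeries
variable {K : Type*} [Field K] [CharZero K]

theorem coeff_pow_zero_of_lt {f : PowerSeries K} (hf : constantCoeff f = 0)
    {n k : ℕ} (h : n < k) : coeff n (f ^ k) = 0 := by
  have hdvd : (X : PowerSeries K) ^ k ∣ f ^ k :=
    pow_dvd_pow_of_dvd (X_dvd_iff.mpr hf) k
  exact X_pow_dvd_iff.mp hdvd n h

theorem pexp_mul {f g : PowerSeries K} (hf : constantCoeff f = 0)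
    (hg : constantCoeff g = 0) : pexp f * pexp g = pexp (f + g) := by
  ext n
  rw [PowerSeries.coeff_mul]
  set F : ℕ × ℕ → K := fun ab =>
    ((ab.1.factorial : K)⁻¹ * (ab.2.factorial : K)⁻¹) * coeff n (f ^ ab.1 * g ^ ab.2) with hF
  have key1 : ∑ ij ∈ Finset.HasAntidiagonal.antidiagonal n,
      coeff ij.1 (pexp f) * coeff ij.2 (pexp g)
      = ∑ ab ∈ Finset.range (n+1) ×ˢ Finset.range (n+1), F ab := by
    have step1 : ∀ ij ∈ Finset.HasAntidiagonal.antidiagonal n,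
        coeff ij.1 (pexp f) * coeff ij.2 (pexp g)
        = ∑ ab ∈ Finset.range (n+1) ×ˢ Finset.range (n+1),
            ((ab.1.factorial : K)⁻¹ * coeff ij.1 (f ^ ab.1)) *
            ((ab.2.factorial : K)⁻¹ * coeff ij.2 (g ^ ab.2)) := by
      rintro ⟨i, j⟩ hij
      rw [Finset.HasAntidiagonal.mem_antidiagonal] at hij
      have hi : i ≤ n := by omega
      have hj : j ≤ n := by omega
      have hfi : coeff i (pexp f) = ∑ a ∈ Finset.range (n+1),
          (a.factorial : K)⁻¹ * coeff i (f ^ a) := by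
        rw [pexp, PowerSeries.coeff_mk]
        apply Finset.sum_subset (Finset.range_subset_range.mpr (by omega))
        intro a _ ha
        rw [Finset.mem_range, not_lt] at ha
        rw [coeff_pow_zero_of_lt hf (by omega), mul_zero]
      have hgj : coeff j (pexp g) = ∑ b ∈ Finset.range (n+1),
          (b.factorial : K)⁻¹ * coeff j (g ^ b) := by
        rw [pexp, PowerSeries.coeff_mk]
        apply Finset.sum_subset (Finset.range_subset_range.mpr (by omega))
        intro b _ hb
        rw [Finset.mem_range, not_lt] at hb
        rw [coeff_pow_zero_of_lt hg (by omega), mul_zero]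
      rw [hfi, hgj, Finset.sum_mul_sum]
      rw [Finset.sum_product]
    rw [Finset.sum_congr rfl step1, Finset.sum_comm]
    apply Finset.sum_congr rfl
    rintro ⟨a, b⟩ _
    rw [hF]
    simp only []
    rw [PowerSeries.coeff_mul, Finset.mul_sum]
    apply Finset.sum_congr rfl
    rintro ⟨i, j⟩ _
    ring
  have key2 : coeff n (pexp (f + g))
      = ∑ ab ∈ Finset.range (n+1) ×ˢ Finset.range (n+1), F ab := by
    rw [pexp, PowerSeries.coeff_mk]
    have expand : ∀ k ∈ Finset.range (n+1),
        (k.factorial : K)⁻¹ * coeff n ((f + g) ^ k)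
        = ∑ ab ∈ Finset.HasAntidiagonal.antidiagonal k, F ab := by
      intro k _
      rw [add_pow, map_sum, Finset.mul_sum]
      rw [Finset.Nat.sum_antidiagonal_eq_sum_range_succ_mk]
      apply Finset.sum_congr rfl
      intro a ha
      rw [Finset.mem_range] at ha
      have hak : a ≤ k := by omega
      rw [hF]
      simp only []
      have hchoose : ((k.choose a : K)) = (k.factorial : K) / ((a.factorial : K) * ((k-a).factorial : K)) :=
        Nat.cast_choose K hak
      have hfac : (k.factorial : K) ≠ 0 := Nat.cast_ne_zero.mpr k.factorial_ne_zero
      have hfa : (a.factorial : K) ≠ 0 := Nat.cast_ne_zero.mpr a.factorial_ne_zero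
      have hfb : ((k-a).factorial : K) ≠ 0 := Nat.cast_ne_zero.mpr (k-a).factorial_ne_zero
      rw [← map_natCast (PowerSeries.C) (k.choose a), PowerSeries.coeff_mul_C]
      field_simp [hchoose]
      rw [hchoose]; field_simp
    rw [Finset.sum_congr rfl expand]
    rw [← Finset.sum_biUnion]
    · apply Finset.sum_subset
      · intro ab hab
        rw [Finset.mem_biUnion] at hab
        obtain ⟨k, hk, habk⟩ := hab
        rw [Finset.mem_range] at hk
        rw [Finset.HasAntidiagonal.mem_antidiagonal] at habk
        rw [Finset.mem_product, Finset.mem_range, Finset.mem_range]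
        omega
      · intro ab hab hnot
        rw [Finset.mem_product, Finset.mem_range, Finset.mem_range] at hab
        have : n < ab.1 + ab.2 := by
          by_contra hcon
          exact hnot (Finset.mem_biUnion.mpr ⟨ab.1 + ab.2, Finset.mem_range.mpr (by omega),
            Finset.HasAntidiagonal.mem_antidiagonal.mpr rfl⟩)
        rw [hF]
        simp only []
        rw [PowerSeries.coeff_mul]
        rw [Finset.sum_eq_zero, mul_zero]
        rintro ⟨i, j⟩ hij
        rw [Finset.HasAntidiagonal.mem_antidiagonal] at hij
        rcases lt_or_ge i ab.1 with h | h
        · rw [coeff_pow_zero_of_lt hf h, zero_mul]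
        · rw [coeff_pow_zero_of_lt hg (by omega), mul_zero]
    · intro x _ y _ hxy
      simp only [Function.onFun]
      apply Finset.disjoint_left.mpr
      intro ab hax hay
      rw [Finset.HasAntidiagonal.mem_antidiagonal] at hax hay
      exact hxy (by omega)
  rw [key1, key2]

theorem pexp_pow {f : PowerSeries K} (hf : constantCoeff f = 0) (N : ℕ) :
    (pexp f) ^ (N + 1) = pexp ((N + 1) • f) := by
  induction N with
  | zero => simp
  | succ k ih =>
    have hkf : constantCoeff ((k+1) • f) = 0 := by
      rw [map_nsmul, hf, smul_zero]
    rw [pow_succ, ih, pexp_mul hkf hf]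
    conv_rhs => rw [succ_nsmul]

end Pexp

section Gauss
open PowerSeries
variable {K : Type*} [Field K] (v : AbsoluteValue K ℝ)
  (hna : ∀ x y : K, v (x + y) ≤ max (v x) (v y))

include hna in
theorem v_sum_lt {ι : Type*} (s : Finset ι) (x : ι → K) {C : ℝ} (hC : 0 < C)
    (h : ∀ i ∈ s, v (x i) < C) : v (∑ i ∈ s, x i) < C := by
  classical
  induction s using Finset.induction_on with
  | empty => simpa using hC
  | insert _ _ hnotmem ih =>
    rename_i a s
    rw [Finset.sum_insert hnotmem]
    refine lt_of_le_of_lt (hna _ _) (max_lt (h a (Finset.mem_insert_self a s))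
      (ih fun i hi => h i (Finset.mem_insert_of_mem hi)))

include hna in
theorem v_add_eq {x y : K} (h : v y < v x) : v (x + y) = v x := by
  refine le_antisymm (le_trans (hna _ _) (max_le le_rfl h.le)) ?_
  have h2 : v x ≤ max (v (x + y)) (v y) := by
    have hx : v x = v ((x + y) + -y) := by congr 1; ring
    rw [hx]
    calc v ((x+y) + -y) ≤ max (v (x+y)) (v (-y)) := hna _ _
    _ = max (v (x+y)) (v y) := by rw [v.map_neg]
  rcases le_max_iff.mp h2 with h3 | h3
  · exact h3
  · linarith

variable (r : ℝ) (hr : 0 < r)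

include hna hr in
theorem gauss_mul (g h : PowerSeries K) (Mg Mh : ℝ) (τg τh : ℕ)
    (hMg : 0 < Mg) (hMh : 0 < Mh)
    (hg1 : ∀ j, v (coeff j g) * r ^ j ≤ Mg)
    (hg2 : v (coeff τg g) * r ^ τg = Mg)
    (hg3 : ∀ j, τg < j → v (coeff j g) * r ^ j < Mg)
    (hh1 : ∀ j, v (coeff j h) * r ^ j ≤ Mh)
    (hh2 : v (coeff τh h) * r ^ τh = Mh)
    (hh3 : ∀ j, τh < j → v (coeff j h) * r ^ j < Mh) :
    (∀ j, v (coeff j (g * h)) * r ^ j ≤ Mg * Mh) ∧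
    (v (coeff (τg + τh) (g * h)) * r ^ (τg + τh) = Mg * Mh) ∧
    (∀ j, τg + τh < j → v (coeff j (g * h)) * r ^ j < Mg * Mh) := by
  have hrp : ∀ j : ℕ, (0:ℝ) < r ^ j := fun j => pow_pos hr j
  have term_le : ∀ (i i' : ℕ), v (coeff i g * coeff i' h) * r ^ (i + i') ≤ Mg * Mh := by
    intro i i'
    rw [v.map_mul, pow_add]
    calc v (coeff i g) * v (coeff i' h) * (r ^ i * r ^ i')
        = (v (coeff i g) * r ^ i) * (v (coeff i' h) * r ^ i') := by ring
    _ ≤ Mg * Mh := mul_le_mul (hg1 i) (hh1 i') (by positivity) hMg.le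
  have term_lt : ∀ (i i' : ℕ), (τg < i ∨ τh < i') →
      v (coeff i g * coeff i' h) * r ^ (i + i') < Mg * Mh := by
    rintro i i' (hi | hi)
    · rw [v.map_mul, pow_add]
      calc v (coeff i g) * v (coeff i' h) * (r ^ i * r ^ i')
          = (v (coeff i g) * r ^ i) * (v (coeff i' h) * r ^ i') := by ring
      _ ≤ (v (coeff i g) * r ^ i) * Mh := by
          apply mul_le_mul_of_nonneg_left (hh1 i') (by positivity)
      _ < Mg * Mh := by
          apply mul_lt_mul_of_pos_right (hg3 i hi) hMh
    · rw [v.map_mul, pow_add]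
      calc v (coeff i g) * v (coeff i' h) * (r ^ i * r ^ i')
          = (v (coeff i' h) * r ^ i') * (v (coeff i g) * r ^ i) := by ring
      _ ≤ (v (coeff i' h) * r ^ i') * Mg := by
          apply mul_le_mul_of_nonneg_left (hg1 i) (by positivity)
      _ < Mh * Mg := by
          apply mul_lt_mul_of_pos_right (hh3 i' hi) hMg
      _ = Mg * Mh := mul_comm _ _
  refine ⟨?_, ?_, ?_⟩
  · intro j
    rw [PowerSeries.coeff_mul]
    rw [← le_div_iff₀ (hrp j)]
    apply v_sum_le v hna
    · positivity
    · rintro ⟨i, i'⟩ hii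
      rw [Finset.HasAntidiagonal.mem_antidiagonal] at hii
      rw [le_div_iff₀ (hrp j), ← hii]
      exact term_le i i'
  · rw [PowerSeries.coeff_mul]
    have hmem : (τg, τh) ∈ Finset.HasAntidiagonal.antidiagonal (τg + τh) := Finset.HasAntidiagonal.mem_antidiagonal.mpr rfl
    rw [← Finset.add_sum_erase _ _ hmem]
    have hrest : v (∑ ij ∈ (Finset.HasAntidiagonal.antidiagonal (τg + τh)).erase (τg, τh),
        coeff ij.1 g * coeff ij.2 h) < Mg * Mh / r ^ (τg + τh) := by
      apply v_sum_lt v hna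
      · positivity
      · rintro ⟨i, i'⟩ hii
        have hne := Finset.ne_of_mem_erase hii
        have hii' := Finset.HasAntidiagonal.mem_antidiagonal.mp (Finset.mem_of_mem_erase hii)
        rw [lt_div_iff₀ (hrp _), ← hii']
        apply term_lt
        rcases Nat.lt_or_ge τg i with h1 | h1
        · left; exact h1
        · right
          rcases Nat.lt_or_ge τh i' with h2 | h2
          · exact h2
          · exfalso; apply hne
            have : i = τg ∧ i' = τh := by omega
            simp [Prod.ext_iff, this.1, this.2]
    have hdiag : v (coeff τg g * coeff τh h) = Mg * Mh / r ^ (τg + τh) := by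
      rw [v.map_mul]
      rw [eq_div_iff (hrp _).ne', pow_add]
      calc v (coeff τg g) * v (coeff τh h) * (r ^ τg * r ^ τh)
          = (v (coeff τg g) * r ^ τg) * (v (coeff τh h) * r ^ τh) := by ring
      _ = Mg * Mh := by rw [hg2, hh2]
    rw [v_add_eq v hna (by rw [hdiag]; exact hrest), hdiag]
    field_simp
  · intro j hj
    rw [PowerSeries.coeff_mul, ← lt_div_iff₀ (hrp j)]
    apply v_sum_lt v hna
    · positivity
    · rintro ⟨i, i'⟩ hii
      rw [Finset.HasAntidiagonal.mem_antidiagonal] at hii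
      rw [lt_div_iff₀ (hrp j), ← hii]
      exact term_lt i i' (by omega)

include hna hr in
theorem gauss_pow (f : PowerSeries K) (M : ℝ) (τ : ℕ) (hM : 0 < M)
    (h1 : ∀ j, v (coeff j f) * r ^ j ≤ M)
    (h2 : v (coeff τ f) * r ^ τ = M)
    (h3 : ∀ j, τ < j → v (coeff j f) * r ^ j < M)
    (N : ℕ) :
    v (coeff ((N + 1) * τ) (f ^ (N + 1))) * r ^ ((N + 1) * τ) = M ^ (N + 1) := by
  suffices H : ∀ N : ℕ, (∀ j, v (coeff j (f ^ (N+1))) * r ^ j ≤ M ^ (N+1)) ∧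
      (v (coeff ((N+1) * τ) (f ^ (N+1))) * r ^ ((N+1) * τ) = M ^ (N+1)) ∧
      (∀ j, (N+1) * τ < j → v (coeff j (f ^ (N+1))) * r ^ j < M ^ (N+1)) by
    exact (H N).2.1
  intro N
  induction N with
  | zero => simpa using ⟨h1, h2, h3⟩
  | succ k ih =>
    have := gauss_mul v hna r hr (f ^ (k+1)) f (M ^ (k+1)) M ((k+1) * τ) τ
      (pow_pos hM _) hM ih.1 ih.2.1 ih.2.2 h1 h2 h3
    rw [← pow_succ] at this
    have harith : (k+1) * τ + τ = (k+1+1) * τ := by ring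
    have hpow : M ^ (k+1) * M = M ^ (k+1+1) := (pow_succ M (k+1)).symm
    rw [harith, hpow] at this
    exact this

end Gauss

section Integrality
open PowerSeries
variable {K : Type*} [Field K] (v : AbsoluteValue K ℝ)
  (hna : ∀ x y : K, v (x + y) ≤ max (v x) (v y))
  (p : ℕ) [Fact p.Prime] (hvp : v (p : K) = 1 / (p : ℝ))

include hna hvp in
theorem v_factorial_inv_le [CharZero K] (k : ℕ) : v (((k.factorial : K))⁻¹) ≤ (p:ℝ) ^ k := by
  have h1 := v_factorial_ge v hna p hvp k
  have hppos : (0:ℝ) < p := by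
    have : (2:ℝ) ≤ p := by exact_mod_cast (Fact.out : p.Prime).two_le
    linarith
  have hfpos : (0:ℝ) < v ((k.factorial : K)) := by
    exact v.pos (Nat.cast_ne_zero.mpr k.factorial_ne_zero)
  rw [map_inv₀]
  calc (v ((k.factorial : K)))⁻¹ ≤ (((p:ℝ))⁻¹ ^ k)⁻¹ := by
        apply inv_anti₀ (by positivity) h1
  _ = (p:ℝ) ^ k := by rw [← inv_pow, inv_inv]

include hna in
theorem coeff_pow_le (Q : PowerSeries K) (B : ℝ) (hB1 : 1 ≤ B)
    (hB : ∀ i, v (coeff i Q) ≤ B) (k : ℕ) : ∀ n, v (coeff n (Q ^ k)) ≤ B ^ k := by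
  induction k with
  | zero =>
    intro n
    rw [pow_zero, pow_zero]
    rw [PowerSeries.coeff_one]
    split
    · simp
    · simp only [v.map_zero]; linarith
  | succ k ih =>
    intro n
    rw [pow_succ, PowerSeries.coeff_mul]
    apply v_sum_le v hna _ _ (by positivity)
    rintro ⟨i, j⟩ _
    rw [v.map_mul, pow_succ]
    apply mul_le_mul (ih i) (hB j) (v.nonneg _) (by positivity)

include hna hvp in
theorem coeff_pexp_nsmul_le [CharZero K] (Q : PowerSeries K) (B : ℝ) (hB1 : 1 ≤ B)
    (hB : ∀ i, v (coeff i Q) ≤ B) (c : ℕ) (D : ℝ)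
    (hcD : v ((c : K)) * ((p:ℝ) * B) ≤ D) (n : ℕ) :
    v (coeff n (pexp (c • Q))) ≤ max 1 (D ^ n) := by
  have hppos : (1:ℝ) ≤ p := by
    have : (2:ℝ) ≤ p := by exact_mod_cast (Fact.out : p.Prime).two_le
    linarith
  have hbase0 : (0:ℝ) ≤ v ((c : K)) * ((p:ℝ) * B) := by positivity
  have hD0 : (0:ℝ) ≤ D := le_trans hbase0 hcD
  rw [pexp, PowerSeries.coeff_mk]
  apply v_sum_le v hna _ _ (le_trans zero_le_one (le_max_left _ _))
  intro k hk
  rw [Finset.mem_range] at hk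
  have hcoeff : coeff n ((c • Q) ^ k) = ((c:K)) ^ k * coeff n (Q ^ k) := by
    rw [nsmul_eq_mul, mul_pow, ← Nat.cast_pow, ← map_natCast (PowerSeries.C) (c ^ k),
      PowerSeries.coeff_C_mul, Nat.cast_pow]
  rw [hcoeff, v.map_mul, v.map_mul, v.map_pow]
  have hterm : v (((k.factorial : K))⁻¹) * (v ((c:K)) ^ k * v (coeff n (Q ^ k)))
      ≤ (v ((c:K)) * ((p:ℝ) * B)) ^ k := by
    calc v (((k.factorial : K))⁻¹) * (v ((c:K)) ^ k * v (coeff n (Q ^ k)))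
        ≤ (p:ℝ) ^ k * (v ((c:K)) ^ k * B ^ k) := by
          apply mul_le_mul (v_factorial_inv_le v hna p hvp k)
          · apply mul_le_mul_of_nonneg_left (coeff_pow_le v hna Q B hB1 hB k n) (by positivity)
          · positivity
          · positivity
    _ = (v ((c:K)) * ((p:ℝ) * B)) ^ k := by rw [mul_pow, mul_pow]; ring
  calc v (((k.factorial : K))⁻¹) * (v ((c:K)) ^ k * v (coeff n (Q ^ k)))
      ≤ (v ((c:K)) * ((p:ℝ) * B)) ^ k := hterm
  _ ≤ D ^ k := pow_le_pow_left₀ hbase0 hcD k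
  _ ≤ max 1 (D ^ n) := by
      rcases le_or_gt D 1 with hD | hD
      · exact le_trans (pow_le_one₀ hD0 hD) (le_max_left _ _)
      · exact le_trans (pow_le_pow_right₀ hD.le (by omega)) (le_max_right _ _)

end Integrality

theorem statement_2 (p : ℕ) [Fact p.Prime] (K : Type*) [Field K] [CharZero K]
    (v : AbsoluteValue K ℝ)
    (hna : ∀ x y : K, v (x + y) ≤ max (v x) (v y))
    (hvp : v (p : K) = 1 / (p : ℝ))
    (P : Polynomial K) (hP0 : P.coeff 0 = 0)
    (b : ℕ → K) (hb : ∀ n, b n = PowerSeries.coeff n (pexp (P : PowerSeries K))) :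
    Filter.limsup (fun n : ℕ => v (b n) ^ (1 / (n : ℝ))) Filter.atTop ≤ 1
      ↔ ∀ n : ℕ, v (b n) ≤ 1 := by
  have hp : p.Prime := Fact.out
  have hp1 : (1:ℝ) < p := by exact_mod_cast hp.one_lt
  set Q : PowerSeries K := (P : PowerSeries K) with hQ
  have hQ0 : PowerSeries.constantCoeff Q = 0 := by
    rw [hQ, ← PowerSeries.coeff_zero_eq_constantCoeff, Polynomial.coeff_coe, hP0]
  set B : ℝ := 1 + ∑ i ∈ Finset.range (P.natDegree + 1), v (P.coeff i) with hBdef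
  have hsum0 : 0 ≤ ∑ i ∈ Finset.range (P.natDegree + 1), v (P.coeff i) :=
    Finset.sum_nonneg fun i _ => v.nonneg _
  have hB1 : 1 ≤ B := by rw [hBdef]; linarith
  have hB : ∀ i, v (PowerSeries.coeff i Q) ≤ B := by
    intro i
    rw [hQ, Polynomial.coeff_coe]
    rcases le_or_gt i P.natDegree with h | h
    · have hs : v (P.coeff i) ≤ ∑ j ∈ Finset.range (P.natDegree + 1), v (P.coeff j) :=
        Finset.single_le_sum (f := fun j => v (P.coeff j)) (fun j _ => v.nonneg _)
          (Finset.mem_range.mpr (by omega))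
      rw [hBdef]; linarith
    · rw [Polynomial.coeff_eq_zero_of_natDegree_lt h, v.map_zero]; linarith
  have hpB1 : 1 ≤ (p:ℝ) * B := by nlinarith
  have hcoe : ∀ n, v (b n) ≤ ((p:ℝ) * B) ^ n := by
    intro n
    have h1 := coeff_pexp_nsmul_le v hna p hvp Q B hB1 hB 1 ((p:ℝ)*B)
      (by rw [Nat.cast_one, v.map_one, one_mul]) n
    rw [one_smul] at h1
    rw [hb n]
    calc v (PowerSeries.coeff n (pexp Q)) ≤ max 1 (((p:ℝ)*B) ^ n) := h1
    _ = ((p:ℝ)*B) ^ n := max_eq_right (one_le_pow₀ hpB1)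
  constructor
  · -- hard direction
    intro hlimsup
    by_contra hcon
    push_neg at hcon
    obtain ⟨n0, hn0⟩ := hcon
    set d := v (b n0) with hd
    have hd1 : 1 < d := hn0
    have hd0 : 0 < d := lt_trans one_pos hd1
    set y : ℝ := ((2:ℝ) * ((n0:ℝ)+1))⁻¹ with hy
    have hy0 : 0 < y := by rw [hy]; positivity
    set c := d ^ y with hc
    have hc1 : 1 < c := (Real.one_lt_rpow_iff_of_pos hd0).mpr (Or.inl ⟨hd1, hy0⟩)
    have hc0 : 0 < c := lt_trans one_pos hc1
    set r := (c * c)⁻¹ with hrdef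
    have hcc1 : 1 < c * c := by nlinarith
    have hr0 : 0 < r := by rw [hrdef]; positivity
    have hr1 : r < 1 := by rw [hrdef]; exact inv_lt_one_of_one_lt₀ hcc1
    have hcc : c * c = d ^ (((n0:ℝ)+1))⁻¹ := by
      rw [hc, ← Real.rpow_add hd0]
      congr 1
      rw [hy, ← two_mul, mul_inv, ← mul_assoc, mul_inv_cancel₀ (two_ne_zero), one_mul]
    have hpow_cc : (c * c) ^ (n0+1) = d := by
      rw [hcc, ← Real.rpow_natCast (d ^ (((n0:ℝ)+1))⁻¹) (n0+1), ← Real.rpow_mul hd0.le]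
      rw [show (((n0:ℝ)+1))⁻¹ * (((n0+1 : ℕ)):ℝ) = 1 by
        push_cast
        field_simp]
      exact Real.rpow_one d
    set w : ℕ → ℝ := fun j => v (b j) * r ^ j with hw
    have hwn0 : 1 < w n0 := by
      have hccn0 : ((c*c):ℝ) ^ n0 ≠ 0 := by positivity
      have hval : w n0 = c * c := by
        show v (b n0) * r ^ n0 = c * c
        rw [← hd, ← hpow_cc, hrdef, inv_pow, pow_succ,
          mul_comm ((c*c)^n0) (c*c), mul_assoc, mul_inv_cancel₀ hccn0, mul_one]
      rw [hval]; exact hcc1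
    -- boundedness above for limsup extraction
    have hbdd : Filter.IsBoundedUnder (· ≤ ·) Filter.atTop
        (fun n : ℕ => v (b n) ^ (1 / (n:ℝ))) := by
      refine ⟨max 1 ((p:ℝ)*B), ?_⟩
      rw [Filter.eventually_map]
      apply Filter.Eventually.of_forall
      intro n
      rcases Nat.eq_zero_or_pos n with h0 | hpos
      · subst h0
        simp [Real.rpow_zero]
      · have h2 : v (b n) ^ (1/(n:ℝ)) ≤ ((p:ℝ)*B) := by
          have hstep : v (b n) ^ (1/(n:ℝ)) ≤ ((((p:ℝ)*B)) ^ n) ^ (1/(n:ℝ)) :=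
            Real.rpow_le_rpow (v.nonneg _) (hcoe n) (by positivity)
          calc v (b n) ^ (1/(n:ℝ)) ≤ ((((p:ℝ)*B)) ^ n) ^ (1/(n:ℝ)) := hstep
          _ = (p:ℝ)*B := by
              rw [← Real.rpow_natCast ((p:ℝ)*B) n, ← Real.rpow_mul (by positivity),
                mul_one_div, div_self (by exact_mod_cast hpos.ne'), Real.rpow_one]
        exact le_trans h2 (le_max_right _ _)
    have hev : ∀ᶠ j in Filter.atTop, v (b j) ^ (1/(j:ℝ)) < c :=
      Filter.eventually_lt_of_limsup_lt (lt_of_le_of_lt hlimsup hc1) hbdd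
    have hev2 : ∀ᶠ j in Filter.atTop, w j < 1 := by
      filter_upwards [hev, Filter.eventually_ge_atTop 1] with j hj hj1
      have hjr : (0:ℝ) < (j:ℝ) := by exact_mod_cast hj1
      have hbj : v (b j) < c ^ j := by
        have h3 : (v (b j) ^ (1/(j:ℝ))) ^ (j:ℕ) < c ^ j :=
          pow_lt_pow_left₀ hj (Real.rpow_nonneg (v.nonneg _) _) (by omega)
        rwa [← Real.rpow_natCast (v (b j) ^ (1/(j:ℝ))) j, ← Real.rpow_mul (v.nonneg _),
          one_div, inv_mul_cancel₀ (ne_of_gt hjr), Real.rpow_one] at h3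
      have hcr : c * r = c⁻¹ := by
        rw [hrdef]
        field_simp
      calc w j = v (b j) * r ^ j := rfl
      _ < c ^ j * r ^ j := mul_lt_mul_of_pos_right hbj (pow_pos hr0 j)
      _ = (c * r) ^ j := (mul_pow c r j).symm
      _ = (c⁻¹) ^ j := by rw [hcr]
      _ ≤ (c⁻¹) ^ 1 := pow_le_pow_of_le_one (by positivity) (by
          rw [inv_le_one_iff₀]; right; exact hc1.le) hj1
      _ < 1 := by rw [pow_one]; exact inv_lt_one_of_one_lt₀ hc1
    obtain ⟨J0, hJ0⟩ := Filter.eventually_atTop.mp hev2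
    set J := max J0 (n0+1) with hJ
    have hn0J : n0 < J := by omega
    have hJbig : ∀ j, J ≤ j → w j < 1 := fun j hj => hJ0 j (by omega)
    have hne : (Finset.range J).Nonempty := Finset.nonempty_range_iff.mpr (by omega)
    set M := (Finset.range J).sup' hne w with hM
    have hMn0 : w n0 ≤ M := Finset.le_sup' w (Finset.mem_range.mpr hn0J)
    have hM1 : 1 < M := lt_of_lt_of_le hwn0 hMn0
    have hTne : ((Finset.range J).filter (fun j => w j = M)).Nonempty := by
      obtain ⟨t0, ht0S, ht0⟩ := Finset.exists_mem_eq_sup' hne w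
      exact ⟨t0, Finset.mem_filter.mpr ⟨ht0S, ht0.symm⟩⟩
    set τ := ((Finset.range J).filter (fun j => w j = M)).max' hTne with hτ
    have hτmem := Finset.max'_mem _ hTne
    rw [Finset.mem_filter] at hτmem
    have hτJ : τ < J := Finset.mem_range.mp hτmem.1
    have h2' : w τ = M := hτmem.2
    have h1' : ∀ j, w j ≤ M := by
      intro j
      rcases lt_or_ge j J with hj | hj
      · exact Finset.le_sup' w (Finset.mem_range.mpr hj)
      · exact le_trans (hJbig j hj).le (by linarith)
    have h3' : ∀ j, τ < j → w j < M := by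
      intro j hjτ
      rcases lt_or_ge j J with hj | hj
      · rcases eq_or_lt_of_le (h1' j) with heq | hlt
        · exfalso
          have : j ≤ τ := Finset.le_max' _ j (Finset.mem_filter.mpr
            ⟨Finset.mem_range.mpr hj, heq⟩)
          omega
        · exact hlt
      · exact lt_trans (hJbig j hj) hM1
    -- choose m
    obtain ⟨m, hm⟩ : ∃ m : ℕ, (p:ℝ) * B < (p:ℝ) ^ m := pow_unbounded_of_one_lt ((p:ℝ)*B) hp1
    set N := p ^ m with hN
    have hNpos : 0 < N := pow_pos hp.pos m
    have hint : ∀ n, v (PowerSeries.coeff n (pexp (N • Q))) ≤ 1 := by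
      intro n
      have hvc : v ((N : K)) = (((p:ℝ))⁻¹) ^ m := by
        rw [hN]
        push_cast
        rw [v.map_pow, hvp, one_div]
      have hcond : v ((N : K)) * ((p:ℝ) * B) ≤ 1 := by
        rw [hvc]
        have hpinv : (((p:ℝ))⁻¹) ^ m * (p:ℝ) ^ m = 1 := by
          rw [← mul_pow, inv_mul_cancel₀ (by positivity), one_pow]
        calc (((p:ℝ))⁻¹) ^ m * ((p:ℝ) * B) ≤ (((p:ℝ))⁻¹) ^ m * (p:ℝ) ^ m := by
              apply mul_le_mul_of_nonneg_left hm.le (by positivity)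
        _ = 1 := hpinv
      have h := coeff_pexp_nsmul_le v hna p hvp Q B hB1 hB N 1 hcond n
      rwa [one_pow, max_self] at h
    -- Gauss norm argument
    have hfb : ∀ j, v (PowerSeries.coeff j (pexp Q)) * r ^ j = w j := by
      intro j
      rw [hw]
      simp only []
      rw [hb j]
    have hgauss := gauss_pow v hna r hr0 (pexp Q) M τ (lt_trans one_pos hM1)
      (fun j => by rw [hfb]; exact h1' j)
      (by rw [hfb]; exact h2')
      (fun j hj => by rw [hfb]; exact h3' j hj)
      (N - 1)
    rw [show N - 1 + 1 = N from by omega] at hgauss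
    have hfN : (pexp Q) ^ N = pexp (N • Q) := by
      have := pexp_pow hQ0 (N - 1)
      rwa [show N - 1 + 1 = N from by omega] at this
    rw [hfN] at hgauss
    have hcontr : M ^ N ≤ 1 := by
      rw [← hgauss]
      apply mul_le_one₀ (hint _) (by positivity) (pow_le_one₀ hr0.le hr1.le)
    have : (1:ℝ) < M ^ N := one_lt_pow₀ hM1 (by omega)
    linarith
  · -- easy direction
    intro hall
    have hub : ∀ n : ℕ, v (b n) ^ (1/(n:ℝ)) ≤ 1 := fun n =>
      Real.rpow_le_one (v.nonneg _) (hall n) (by positivity)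
    have hcob : Filter.IsCoboundedUnder (· ≤ ·) Filter.atTop
        (fun n : ℕ => v (b n) ^ (1/(n:ℝ))) := by
      apply Filter.IsBoundedUnder.isCoboundedUnder_le
      refine ⟨0, ?_⟩
      rw [Filter.eventually_map]
      exact Filter.Eventually.of_forall fun n => Real.rpow_nonneg (v.nonneg _) _
    exact Filter.limsup_le_of_le hcob (Filter.Eventually.of_forall hub)
end

section
/- Let d ≥ 1 and let ζ ∈ K be a primitive p^{d+1}-th root of unity. For 0 ≤ j ≤ d set ζ_j = ζ^{p^{d−j}} (a primitive p^{j+1}-th root of unity) and let w^{(j)} ∈ W(K) be the unique Witt vector with ghost components ghost_i(w^{(j)}) = ζ_j^{p^i} − 1 for all i ≥ 0. Let H(X) = ((X+1)^p − 1)/X = ∑_{k=1}^{p} binom(p,k) X^{k−1} ∈ ℤ[X]. Then for every 1 ≤ j ≤ d one has F(w^{(j)}) = w^{(j−1)} and w^{(j−1)} = w^{(j)} · H(w^{(j)}) in W(K), where H(w^{(j)}) denotes the evaluation of the integer polynomial H at the Witt vector w^{(j)}. In particular, in W(K) the principal ideals satisfy (w^{(0)}) ⊆ (w^{(1)}) ⊆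 … ⊆ (w^{(d)}). -/
theorem statement_7 (p : ℕ) [Fact p.Prime] (K : Type*) [Field K] [CharZero K]
    (v : AbsoluteValue K ℝ)
    (hna : ∀ x y : K, v (x + y) ≤ max (v x) (v y))
    (hvp : v (p : K) = 1 / (p : ℝ))
    (d : ℕ) (hd : 1 ≤ d) (ζ : K) (hζ : IsPrimitiveRoot ζ (p ^ (d + 1)))
    (w : ℕ → WittVector p K)
    (hw : ∀ j ≤ d, ∀ i : ℕ,
      WittVector.ghostComponent i (w j) = (ζ ^ (p ^ (d - j))) ^ (p ^ i) - 1)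
    (H : Polynomial ℤ)
    (hH : H = ∑ k ∈ Finset.Icc 1 p, Polynomial.C (p.choose k : ℤ) * Polynomial.X ^ (k - 1)) :
    ∀ j : ℕ, 1 ≤ j → j ≤ d →
      WittVector.frobenius (w j) = w (j - 1)
      ∧ w (j - 1) = w j * Polynomial.aeval (w j) H
      ∧ Ideal.span {w (j - 1)} ≤ Ideal.span {w j} := by
  haveI : Invertible (p : K) := invertibleOfNonzero (by
    exact_mod_cast Nat.cast_ne_zero.mpr (Fact.out : p.Prime).ne_zero)
  have hp1 : 1 ≤ p := (Fact.out : p.Prime).one_lt.le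
  -- key scalar identity: g * H(g) = (g+1)^p - 1
  have hHval : ∀ g : K, g * Polynomial.aeval g H = (g + 1) ^ p - 1 := by
    intro g
    rw [hH]
    simp only [map_sum, map_mul, map_pow, Polynomial.aeval_C, Polynomial.aeval_X,
      eq_intCast, Int.cast_natCast, Finset.mul_sum]
    rw [add_pow]
    have hins : Finset.range (p + 1) = insert 0 (Finset.Icc 1 p) := by
      ext x; simp; omega
    rw [hins, Finset.sum_insert (by simp)]
    simp only [pow_zero, one_pow, one_mul, Nat.choose_zero_right, Nat.cast_one, mul_one]
    rw [add_comm (1 : K), add_sub_cancel_right]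
    apply Finset.sum_congr rfl
    intro k hk
    simp only [Finset.mem_Icc] at hk
    rw [map_natCast, mul_left_comm, ← pow_succ', Nat.sub_add_cancel hk.1, mul_comm]
  intro j hj1 hjd
  have hjd' : j - 1 ≤ d := le_trans (Nat.sub_le j 1) hjd
  have key : ∀ i : ℕ, WittVector.ghostComponent i (w (j - 1))
      = ((ζ ^ p ^ (d - j)) ^ p ^ i) ^ p - 1 := by
    intro i
    rw [hw (j - 1) hjd' i]
    congr 1
    rw [← pow_mul, ← pow_mul, ← pow_mul]
    congr 1
    have : d - (j - 1) = (d - j) + 1 := by omega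
    rw [this, pow_succ]
    ring
  have ginj := (WittVector.ghostMap.bijective_of_invertible p K).injective
  constructor
  · -- Frobenius
    apply ginj
    funext i
    rw [WittVector.ghostMap_apply, WittVector.ghostMap_apply,
      WittVector.ghostComponent_frobenius, hw j hjd (i + 1), key i]
    congr 1
    rw [← pow_mul, ← pow_mul, ← pow_mul]
    congr 1
  have haev : ∀ i : ℕ, WittVector.ghostComponent i (Polynomial.aeval (w j) H)
      = Polynomial.aeval (WittVector.ghostComponent i (w j)) H := by
    intro i
    exact (Polynomial.aeval_algHom_apply
      (WittVector.ghostComponent (p := p) (R := K) i).toIntAlgHom (w j) H).symm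
  have hmul : w (j - 1) = w j * Polynomial.aeval (w j) H := by
    apply ginj
    funext i
    rw [WittVector.ghostMap_apply, WittVector.ghostMap_apply, map_mul, key i,
      haev i, hw j hjd i, hHval]
    rw [sub_add_cancel]
  refine ⟨hmul, ?_⟩
  rw [Ideal.span_singleton_le_span_singleton, hmul]
  exact Dvd.intro _ rfl
end
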